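/- arXiv:1405.6851 — 3 statements merged into one kernel-verified Lean document; each statement's English description precedes it below -/
import Mathlib

section
/- Let U and V be finite sets of real numbers, let k be a real number, and partition U = U⁺ ∪ U⁼ ∪ U⁻ and V = V⁺ ∪ V⁼ ∪ V⁻ according to whether elements are greater than, equal to, or less than k. Suppose |V|·|U⁺| + |U|·|V⁺| ≤ |U|·|V| and |V|·|U⁻| + |U|·|V⁻| ≤ |U|·|V| (the weighted-median property). Then |U⁺|·|V⁺| + |U⁻|·|V⁻| + (1/2)·|U⁼|·|V⁼| ≤ (1/2)·|U|·|V|. -/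
lemma tri_card_aux (k : ℝ) (W : Finset ℝ) :
    (W.filter (fun x => k < x)).card + (W.filter (fun x => x = k)).card +
      (W.filter (fun x => x < k)).card = W.card := by
  classical
  have h1 := Finset.card_filter_add_card_filter_not (s := W) (p := fun x => k < x)
  have h2 := Finset.card_filter_add_card_filter_not
    (s := W.filter (fun x => ¬ k < x)) (p := fun x => x = k)
  have e1 : (W.filter (fun x => ¬ k < x)).filter (fun x => x = k) = W.filter (fun x => x = k) := by
    rw [Finset.filter_filter]
    apply Finset.filter_congr
    intro x _
    constructor
    · rintro ⟨_, h⟩; exact h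
    · rintro h; exact ⟨by simp [h], h⟩
  have e2 : (W.filter (fun x => ¬ k < x)).filter (fun x => ¬ x = k) = W.filter (fun x => x < k) := by
    rw [Finset.filter_filter]
    apply Finset.filter_congr
    intro x _
    constructor
    · rintro ⟨h1, h2⟩; exact lt_of_le_of_ne (not_lt.mp h1) h2
    · rintro h; exact ⟨not_lt.mpr h.le, ne_of_lt h⟩
  rw [e1, e2] at h2
  omega

lemma measure_arith (a b c p q r : ℝ) (ha : 0 ≤ a) (hb : 0 ≤ b) (hc : 0 ≤ c)
    (hp : 0 ≤ p) (hq : 0 ≤ q) (hr : 0 ≤ r)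
    (h1 : (p + q + r) * a + (a + b + c) * p ≤ (a + b + c) * (p + q + r))
    (h2 : (p + q + r) * c + (a + b + c) * r ≤ (a + b + c) * (p + q + r)) :
    a * p + c * r + 1/2 * b * q ≤ 1/2 * (a + b + c) * (p + q + r) := by
  have hA : a * p ≤ (b + c) * (q + r) := by nlinarith [h1]
  have hB : c * r ≤ (a + b) * (p + q) := by nlinarith [h2]
  nlinarith [sq_nonneg (a*r - c*p), sq_nonneg (a*q - b*p), sq_nonneg (b*r - c*q),
    mul_nonneg ha hq, mul_nonneg ha hr, mul_nonneg hb hp, mul_nonneg hb hr,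
    mul_nonneg hc hp, mul_nonneg hc hq, mul_nonneg hb hq, mul_nonneg ha hp,
    mul_nonneg hc hr,
    mul_nonneg (mul_nonneg ha hr) (mul_nonneg hc hp),
    mul_nonneg (sub_nonneg.mpr hA) (sub_nonneg.mpr hB),
    mul_nonneg (sub_nonneg.mpr hA) (add_nonneg (mul_nonneg ha hr) (mul_nonneg hc hp)),
    mul_nonneg (sub_nonneg.mpr hB) (add_nonneg (mul_nonneg ha hr) (mul_nonneg hc hp))]

theorem measure_decrease_inequality (U V : Finset ℝ) (k : ℝ)
    (hplus : V.card * (U.filter (fun u => k < u)).card +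
        U.card * (V.filter (fun v => k < v)).card ≤ U.card * V.card)
    (hminus : V.card * (U.filter (fun u => u < k)).card +
        U.card * (V.filter (fun v => v < k)).card ≤ U.card * V.card) :
    ((U.filter (fun u => k < u)).card : ℝ) * (V.filter (fun v => k < v)).card +
      ((U.filter (fun u => u < k)).card : ℝ) * (V.filter (fun v => v < k)).card +
      (1/2) * (U.filter (fun u => u = k)).card * (V.filter (fun v => v = k)).card ≤
      (1/2) * U.card * V.card := by
  have hU := tri_card_aux k U
  have hV := tri_card_aux k V
  have hU' : ((U.filter (fun u => k < u)).card : ℝ) + (U.filter (fun u => u = k)).card +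
      (U.filter (fun u => u < k)).card = U.card := by exact_mod_cast congrArg Nat.cast hU
  have hV' : ((V.filter (fun v => k < v)).card : ℝ) + (V.filter (fun v => v = k)).card +
      (V.filter (fun v => v < k)).card = V.card := by exact_mod_cast congrArg Nat.cast hV
  have h1 : ((V.card : ℝ)) * (U.filter (fun u => k < u)).card +
      (U.card : ℝ) * (V.filter (fun v => k < v)).card ≤ (U.card : ℝ) * V.card := by
    exact_mod_cast hplus
  have h2 : ((V.card : ℝ)) * (U.filter (fun u => u < k)).card +
      (U.card : ℝ) * (V.filter (fun v => v < k)).card ≤ (U.card : ℝ) * V.card := by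
    exact_mod_cast hminus
  rw [← hU', ← hV'] at h1 h2 ⊢
  exact measure_arith _ _ _ _ _ _ (Nat.cast_nonneg _) (Nat.cast_nonneg _) (Nat.cast_nonneg _)
    (Nat.cast_nonneg _) (Nat.cast_nonneg _) (Nat.cast_nonneg _) h1 h2
end

section
/- Let A be a real m×n matrix, b ∈ ℝ^m, c ∈ ℝ^n, and partition {1,...,n} into X₁ and X₂. For assignments φ₁ : X₁ → {0,1} and φ₂ : X₂ → {0,1}, define u(φ₁)_i = Σ_{j∈X₁} A_{ij}φ₁(j), v(φ₂)_i = b_i − Σ_{j∈X₂} A_{ij}φ₂(j), and weights w₁(φ₁) = Σ_{j∈X₁} c_j φ₁(j), w₂(φ₂) = Σ_{j∈X₂} c_j φ₂(j). Then the minimum of c^T x over x ∈ {0,1}^n with Ax = b (when the feasible set is nonempty) equals the minimum of w₁(φ₁) + w₂(φ₂) over pairs (φ₁, φ₂) with u(φ₁) = v(φ₂). -/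
open Finset in
theorem two_table_optimization {m n : ℕ} (A : Matrix (Fin m) (Fin n) ℝ)
    (b : Fin m → ℝ) (c : Fin n → ℝ) (X₁ X₂ : Finset (Fin n))
    (hunion : X₁ ∪ X₂ = Finset.univ) (hdisj : Disjoint X₁ X₂)
    (hfeas : ∃ x : Fin n → ℝ, (∀ j, x j = 0 ∨ x j = 1) ∧ A.mulVec x = b) :
    sInf {y : ℝ | ∃ x : Fin n → ℝ, (∀ j, x j = 0 ∨ x j = 1) ∧ A.mulVec x = b ∧
        y = ∑ j, c j * x j} =
    sInf {y : ℝ | ∃ φ₁ φ₂ : Fin n → ℝ,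
        (∀ j, φ₁ j = 0 ∨ φ₁ j = 1) ∧ (∀ j, φ₂ j = 0 ∨ φ₂ j = 1) ∧
        (∀ i, ∑ j ∈ X₁, A i j * φ₁ j = b i - ∑ j ∈ X₂, A i j * φ₂ j) ∧
        y = (∑ j ∈ X₁, c j * φ₁ j) + ∑ j ∈ X₂, c j * φ₂ j} := by
  have hmem : ∀ j : Fin n, j ∉ X₁ → j ∈ X₂ := by
    intro j hj
    have : j ∈ X₁ ∪ X₂ := hunion ▸ Finset.mem_univ j
    simpa [hj] using Finset.mem_union.mp this
  have hnot : ∀ j : Fin n, j ∈ X₂ → j ∉ X₁ := fun j hj =>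
    Finset.disjoint_right.mp hdisj hj
  congr 1
  ext y
  constructor
  · rintro ⟨x, h01, hAx, hy⟩
    refine ⟨fun j => if j ∈ X₁ then x j else 0,
            fun j => if j ∈ X₂ then x j else 0, ?_, ?_, ?_, ?_⟩
    · intro j; by_cases h : j ∈ X₁ <;> simp [h, h01 j]
    · intro j; by_cases h : j ∈ X₂ <;> simp [h, h01 j]
    · intro i
      have hb : ∑ j ∈ X₁, A i j * x j + ∑ j ∈ X₂, A i j * x j = b i := by
        rw [← Finset.sum_union hdisj, hunion]
        have := congrFun hAx i
        simpa [Matrix.mulVec, dotProduct, mul_comm] using this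
      have h1 : ∑ j ∈ X₁, A i j * (if j ∈ X₁ then x j else 0)
          = ∑ j ∈ X₁, A i j * x j := Finset.sum_congr rfl (by intro j hj; simp [hj])
      have h2 : ∑ j ∈ X₂, A i j * (if j ∈ X₂ then x j else 0)
          = ∑ j ∈ X₂, A i j * x j := Finset.sum_congr rfl (by intro j hj; simp [hj])
      rw [h1, h2]; linarith
    · have h1 : ∑ j ∈ X₁, c j * (if j ∈ X₁ then x j else 0)
          = ∑ j ∈ X₁, c j * x j := Finset.sum_congr rfl (by intro j hj; simp [hj])
      have h2 : ∑ j ∈ X₂, c j * (if j ∈ X₂ then x j else 0)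
          = ∑ j ∈ X₂, c j * x j := Finset.sum_congr rfl (by intro j hj; simp [hj])
      rw [h1, h2, ← Finset.sum_union hdisj, hunion, hy]
  · rintro ⟨φ₁, φ₂, h₁, h₂, hc, hy⟩
    refine ⟨fun j => if j ∈ X₁ then φ₁ j else φ₂ j, ?_, ?_, ?_⟩
    · intro j; by_cases h : j ∈ X₁ <;> simp [h, h₁ j, h₂ j]
    · funext i
      have e1 : ∑ j ∈ X₁, A i j * (if j ∈ X₁ then φ₁ j else φ₂ j)
          = ∑ j ∈ X₁, A i j * φ₁ j := Finset.sum_congr rfl (by intro j hj; simp [hj])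
      have e2 : ∑ j ∈ X₂, A i j * (if j ∈ X₁ then φ₁ j else φ₂ j)
          = ∑ j ∈ X₂, A i j * φ₂ j := Finset.sum_congr rfl (by intro j hj; simp [hnot j hj])
      have : Matrix.mulVec A (fun j => if j ∈ X₁ then φ₁ j else φ₂ j) i
          = ∑ j ∈ X₁, A i j * φ₁ j + ∑ j ∈ X₂, A i j * φ₂ j := by
        rw [← e1, ← e2, ← Finset.sum_union hdisj, hunion]
        simp [Matrix.mulVec, dotProduct, mul_comm, mul_ite]
      rw [this, hc i]; ring
    · have e1 : ∑ j ∈ X₁, c j * (if j ∈ X₁ then φ₁ j else φ₂ j)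
          = ∑ j ∈ X₁, c j * φ₁ j := Finset.sum_congr rfl (by intro j hj; simp [hj])
      have e2 : ∑ j ∈ X₂, c j * (if j ∈ X₁ then φ₁ j else φ₂ j)
          = ∑ j ∈ X₂, c j * φ₂ j := Finset.sum_congr rfl (by intro j hj; simp [hnot j hj])
      rw [hy, ← e1, ← e2, ← Finset.sum_union hdisj, hunion]
end

section
/- Let A be a real m×n matrix, b ∈ ℝ^m, with n divisible by 4. Partition {1,...,n} into X₁, X₂, X₃, X₄ of equal size. For assignments φ_p on X_p define u_i = Σ_{j∈X₁} A_{ij}φ₁(j), v_i = Σ_{j∈X₂} A_{ij}φ₂(j), s_i = −Σ_{j∈X₃} A_{ij}φ₃(j), t_i = b_i − Σ_{j∈X₄} A_{ij}φ₄(j). Then there exists x ∈ {0,1}^n with Ax = b if and only if there exist assignments φ₁, φ₂, φ₃, φ₄ such that u + v = s + t in ℝ^m. -/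
open Finset in
theorem four_table_feasibility {m n : ℕ} (A : Matrix (Fin m) (Fin n) ℝ) (b : Fin m → ℝ)
    (hn : 4 ∣ n) (X₁ X₂ X₃ X₄ : Finset (Fin n))
    (hunion : X₁ ∪ X₂ ∪ X₃ ∪ X₄ = Finset.univ)
    (h12 : Disjoint X₁ X₂) (h13 : Disjoint X₁ X₃) (h14 : Disjoint X₁ X₄)
    (h23 : Disjoint X₂ X₃) (h24 : Disjoint X₂ X₄) (h34 : Disjoint X₃ X₄)
    (hc₁ : X₁.card = n / 4) (hc₂ : X₂.card = n / 4)
    (hc₃ : X₃.card = n / 4) (hc₄ : X₄.card = n / 4) :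
    (∃ x : Fin n → ℝ, (∀ j, x j = 0 ∨ x j = 1) ∧ A.mulVec x = b) ↔
    (∃ φ₁ φ₂ φ₃ φ₄ : Fin n → ℝ,
      (∀ j, φ₁ j = 0 ∨ φ₁ j = 1) ∧ (∀ j, φ₂ j = 0 ∨ φ₂ j = 1) ∧
      (∀ j, φ₃ j = 0 ∨ φ₃ j = 1) ∧ (∀ j, φ₄ j = 0 ∨ φ₄ j = 1) ∧
      ∀ i, (∑ j ∈ X₁, A i j * φ₁ j) + (∑ j ∈ X₂, A i j * φ₂ j) =
        (- ∑ j ∈ X₃, A i j * φ₃ j) + (b i - ∑ j ∈ X₄, A i j * φ₄ j)) := by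
  have hsplit : ∀ (f : Fin n → ℝ),
      ∑ j, f j = (∑ j ∈ X₁, f j) + (∑ j ∈ X₂, f j) + (∑ j ∈ X₃, f j) + (∑ j ∈ X₄, f j) := by
    intro f
    rw [← hunion, Finset.sum_union, Finset.sum_union, Finset.sum_union]
    · exact h12
    · exact Finset.disjoint_union_left.mpr ⟨h13, h23⟩
    · exact Finset.disjoint_union_left.mpr ⟨Finset.disjoint_union_left.mpr ⟨h14, h24⟩, h34⟩
  constructor
  · rintro ⟨x, hx01, hx⟩
    refine ⟨x, x, x, x, hx01, hx01, hx01, hx01, fun i => ?_⟩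
    have := congrFun hx i
    rw [Matrix.mulVec, dotProduct] at this
    rw [hsplit (fun j => A i j * x j)] at this
    linarith
  · rintro ⟨φ₁, φ₂, φ₃, φ₄, h1, h2, h3, h4, heq⟩
    classical
    set x : Fin n → ℝ := fun j =>
      if j ∈ X₁ then φ₁ j else if j ∈ X₂ then φ₂ j else if j ∈ X₃ then φ₃ j else φ₄ j with hxdef
    refine ⟨x, fun j => ?_, ?_⟩
    · simp only [hxdef]
      split_ifs
      · exact h1 j
      · exact h2 j
      · exact h3 j
      · exact h4 j
    · funext i
      rw [Matrix.mulVec, dotProduct, hsplit (fun j => A i j * x j)]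
      have e1 : ∑ j ∈ X₁, A i j * x j = ∑ j ∈ X₁, A i j * φ₁ j := by
        refine Finset.sum_congr rfl fun j hj => ?_
        simp [hxdef, hj]
      have e2 : ∑ j ∈ X₂, A i j * x j = ∑ j ∈ X₂, A i j * φ₂ j := by
        refine Finset.sum_congr rfl fun j hj => ?_
        have : j ∉ X₁ := fun h => Finset.disjoint_left.mp h12 h hj
        simp [hxdef, hj, this]
      have e3 : ∑ j ∈ X₃, A i j * x j = ∑ j ∈ X₃, A i j * φ₃ j := by
        refine Finset.sum_congr rfl fun j hj => ?_
        have n1 : j ∉ X₁ := fun h => Finset.disjoint_left.mp h13 h hj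
        have n2 : j ∉ X₂ := fun h => Finset.disjoint_left.mp h23 h hj
        simp [hxdef, hj, n1, n2]
      have e4 : ∑ j ∈ X₄, A i j * x j = ∑ j ∈ X₄, A i j * φ₄ j := by
        refine Finset.sum_congr rfl fun j hj => ?_
        have n1 : j ∉ X₁ := fun h => Finset.disjoint_left.mp h14 h hj
        have n2 : j ∉ X₂ := fun h => Finset.disjoint_left.mp h24 h hj
        have n3 : j ∉ X₃ := fun h => Finset.disjoint_left.mp h34 h hj
        simp [hxdef, hj, n1, n2, n3]
      rw [e1, e2, e3, e4]
      have := heq i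
      linarith
end
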